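/- There is no probability measure μ on ℝ² satisfying simultaneously ∫ x⁴y² dμ(x,y) = 17, ∫ x²y⁴ dμ(x,y) = 17, and ∫ x²y² dμ(x,y) = 66. (Indeed, since X⁴Y² + X²Y⁴ − X²Y² + 1 ≥ 0 on ℝ², any probability measure with ∫x⁴y² dμ = 17 and ∫x²y⁴ dμ = 17 must satisfy ∫x²y² dμ ≤ 35; hence the positive semidefinite matrix Z_e of the paper, which prescribes these three moment values, is not the moment matrix of any probability measure.) -/
import Mathlib


open MeasureTheory

/-- there is no probability measure `μ` on `ℝ²` with
`∫ x⁴y² dμ = 17`, `∫ x²y⁴ dμ = 17` and `∫ x²y² dμ = 66` (the integrals of these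
nonnegative functions being taken as Lebesgue integrals with values in `[0,∞]`). -/
theorem statement14 :
    ¬ ∃ μ : Measure (ℝ × ℝ), IsProbabilityMeasure μ ∧
      (∫⁻ p : ℝ × ℝ, ENNReal.ofReal (p.1 ^ 4 * p.2 ^ 2) ∂μ) = 17 ∧
      (∫⁻ p : ℝ × ℝ, ENNReal.ofReal (p.1 ^ 2 * p.2 ^ 4) ∂μ) = 17 ∧
      (∫⁻ p : ℝ × ℝ, ENNReal.ofReal (p.1 ^ 2 * p.2 ^ 2) ∂μ) = 66 := by
  rintro ⟨μ, hμ, h1, h2, h3⟩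
  have hmf : Measurable fun p : ℝ × ℝ => ENNReal.ofReal (p.1 ^ 4 * p.2 ^ 2) := by
    apply Measurable.ennreal_ofReal; fun_prop
  have hmg : Measurable fun p : ℝ × ℝ => ENNReal.ofReal (p.1 ^ 2 * p.2 ^ 4) := by
    apply Measurable.ennreal_ofReal; fun_prop
  have key : ∀ p : ℝ × ℝ, 3 * ENNReal.ofReal (p.1 ^ 2 * p.2 ^ 2)
      ≤ ENNReal.ofReal (p.1 ^ 4 * p.2 ^ 2) + ENNReal.ofReal (p.1 ^ 2 * p.2 ^ 4) + 1 := by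
    intro p
    have hA : (0:ℝ) ≤ p.1 ^ 4 * p.2 ^ 2 := by positivity
    have hB : (0:ℝ) ≤ p.1 ^ 2 * p.2 ^ 4 := by positivity
    have h3e : (3 : ENNReal) = ENNReal.ofReal 3 := by norm_num
    have h1e : (1 : ENNReal) = ENNReal.ofReal 1 := by norm_num
    rw [h3e, ← ENNReal.ofReal_mul (by norm_num), h1e, ← ENNReal.ofReal_add hA hB,
      ← ENNReal.ofReal_add (add_nonneg hA hB) zero_le_one]
    apply ENNReal.ofReal_le_ofReal
    nlinarith [sq_nonneg (p.1 * p.2 * (p.1 - p.2)), sq_nonneg (p.1 * p.2 * (p.1 + p.2)),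
      sq_nonneg (p.1 * p.2 - 1), sq_nonneg (p.1 * p.2 + 1), sq_nonneg (p.1 * p.2)]
  have hle : 3 * (∫⁻ p : ℝ × ℝ, ENNReal.ofReal (p.1 ^ 2 * p.2 ^ 2) ∂μ)
      ≤ (∫⁻ p : ℝ × ℝ, ENNReal.ofReal (p.1 ^ 4 * p.2 ^ 2) ∂μ)
        + (∫⁻ p : ℝ × ℝ, ENNReal.ofReal (p.1 ^ 2 * p.2 ^ 4) ∂μ) + 1 := by
    rw [← lintegral_const_mul 3 (by apply Measurable.ennreal_ofReal; fun_prop)]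
    calc ∫⁻ p : ℝ × ℝ, 3 * ENNReal.ofReal (p.1 ^ 2 * p.2 ^ 2) ∂μ
        ≤ ∫⁻ p : ℝ × ℝ, (ENNReal.ofReal (p.1 ^ 4 * p.2 ^ 2)
            + ENNReal.ofReal (p.1 ^ 2 * p.2 ^ 4) + 1) ∂μ := lintegral_mono key
      _ = _ := by
          rw [lintegral_add_right _ measurable_const, lintegral_add_left hmf,
            lintegral_const, measure_univ, mul_one]
  rw [h1, h2, h3] at hle
  norm_num at hle
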